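/- Let m, n be positive integers, A ∈ ℝ^{m×n}, b ∈ ℝ^m, and let L be a natural number with 0 < L < m. Suppose A satisfies the 2-Absolute Range Property of order L for some ψ ∈ (0,1), and suppose x* ∈ ℝ^n satisfies ‖|Ax*|² − b‖₀ ≤ L. Then: (i) ‖|Ax|² − b‖₁ ≥ ‖|Ax*|² − b‖₁ for all x ∈ ℝ^n, i.e., x* is a global minimizer of f₂(x) := ‖|Ax|² − b‖₁; (ii) for every x ∈ ℝ^n, ‖|Ax|² − |Ax*|²‖₁ ≤ (2(1+ψ)/(1−ψ)) · σ²_L(x); (iii) if x̃ is any other global minimizer of f₂, then |Ax̃| = |Ax*| componentwise. -/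

import Mathlib

open Finset

/-- `sigmaL L v` : the minimum over subsets `T` of cardinality `L` of the sum of `|v i|`
over the complement of `T`, i.e. the sum of all but the `L` largest entries of `|v|`. -/
noncomputable def sigmaL {m : ℕ} (L : ℕ) (v : Fin m → ℝ) : ℝ :=
  ⨅ T : {T : Finset (Fin m) // T.card = L}, ∑ i ∈ (T : Finset (Fin m))ᶜ, |v i|

theorem stmt_2 (m n : ℕ) (hm : 0 < m) (hn : 0 < n)
    (A : Fin m → Fin n → ℝ) (b : Fin m → ℝ)
    (L : ℕ) (hL0 : 0 < L) (hLm : L < m)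
    (ψ : ℝ) (hψ0 : 0 < ψ) (hψ1 : ψ < 1)
    (hARP : ∀ (x y : Fin n → ℝ) (T : Finset (Fin m)), T.card ≤ L →
      ∑ i ∈ T, |(∑ j, A i j * x j) ^ 2 - (∑ j, A i j * y j) ^ 2| ≤
        ψ * ∑ i ∈ Tᶜ, |(∑ j, A i j * x j) ^ 2 - (∑ j, A i j * y j) ^ 2|)
    (xs : Fin n → ℝ)
    (hsparse : (univ.filter fun i => (∑ j, A i j * xs j) ^ 2 - b i ≠ 0).card ≤ L) :
    (∀ x : Fin n → ℝ,
        ∑ i, |(∑ j, A i j * x j) ^ 2 - b i| ≥ ∑ i, |(∑ j, A i j * xs j) ^ 2 - b i|) ∧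
    (∀ x : Fin n → ℝ,
        ∑ i, |(∑ j, A i j * x j) ^ 2 - (∑ j, A i j * xs j) ^ 2| ≤
          (2 * (1 + ψ) / (1 - ψ)) * sigmaL L (fun i => (∑ j, A i j * x j) ^ 2 - b i)) ∧
    (∀ xt : Fin n → ℝ,
        (∀ x : Fin n → ℝ,
          ∑ i, |(∑ j, A i j * xt j) ^ 2 - b i| ≤ ∑ i, |(∑ j, A i j * x j) ^ 2 - b i|) →
        ∀ i, |∑ j, A i j * xt j| = |∑ j, A i j * xs j|) := by
  classical
  set f : (Fin n → ℝ) → Fin m → ℝ := fun x i => (∑ j, A i j * x j) ^ 2 - b i with hf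
  have hARP' : ∀ (x y : Fin n → ℝ) (T : Finset (Fin m)), T.card ≤ L →
      ∑ i ∈ T, |f x i - f y i| ≤ ψ * ∑ i ∈ Tᶜ, |f x i - f y i| := by
    intro x y T hT
    have h := hARP x y T hT
    have e : ∀ i : Fin m,
        (∑ j, A i j * x j) ^ 2 - (∑ j, A i j * y j) ^ 2 = f x i - f y i := by
      intro i; simp only [hf]; ring
    calc ∑ i ∈ T, |f x i - f y i|
        = ∑ i ∈ T, |(∑ j, A i j * x j) ^ 2 - (∑ j, A i j * y j) ^ 2| := by
          simp_rw [e]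
      _ ≤ ψ * ∑ i ∈ Tᶜ, |(∑ j, A i j * x j) ^ 2 - (∑ j, A i j * y j) ^ 2| := h
      _ = ψ * ∑ i ∈ Tᶜ, |f x i - f y i| := by simp_rw [e]
  set S : Finset (Fin m) := univ.filter fun i => f xs i ≠ 0 with hSdef
  have hScard : S.card ≤ L := hsparse
  have hS0 : ∀ i : Fin m, i ∉ S → f xs i = 0 := by
    intro i hi
    by_contra h
    exact hi (mem_filter.mpr ⟨mem_univ i, h⟩)
  have hdu : ∀ (x : Fin n → ℝ) (i : Fin m), i ∉ S → |f x i - f xs i| = |f x i| := by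
    intro x i hi; rw [hS0 i hi, sub_zero]
  -- key inequality used for (i) and (iii)
  have key : ∀ x : Fin n → ℝ,
      ∑ i, |f xs i| ≤ ∑ i ∈ S, |f x i| + ψ * ∑ i ∈ Sᶜ, |f x i| := by
    intro x
    have h1 : ∑ i ∈ S, |f x i - f xs i| ≤ ψ * ∑ i ∈ Sᶜ, |f x i| := by
      have h := hARP' x xs S hScard
      rwa [Finset.sum_congr rfl (fun i hi => hdu x i (Finset.mem_compl.mp hi))] at h
    have h2 : ∑ i, |f xs i| = ∑ i ∈ S, |f xs i| := by
      rw [← Finset.sum_add_sum_compl S fun i => |f xs i|]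
      have hz : ∑ i ∈ Sᶜ, |f xs i| = 0 :=
        Finset.sum_eq_zero fun i hi => by rw [hS0 i (Finset.mem_compl.mp hi), abs_zero]
      rw [hz, add_zero]
    calc ∑ i, |f xs i| = ∑ i ∈ S, |f xs i| := h2
      _ ≤ ∑ i ∈ S, (|f x i| + |f x i - f xs i|) := by
          apply Finset.sum_le_sum
          intro i _
          have h3 := abs_sub_abs_le_abs_sub (f xs i) (f x i)
          have h4 : |f xs i - f x i| = |f x i - f xs i| := abs_sub_comm _ _
          linarith
      _ = ∑ i ∈ S, |f x i| + ∑ i ∈ S, |f x i - f xs i| := Finset.sum_add_distrib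
      _ ≤ _ := by linarith
  have part1 : ∀ x : Fin n → ℝ, ∑ i, |f x i| ≥ ∑ i, |f xs i| := by
    intro x
    have hk := key x
    have hcnn : (0:ℝ) ≤ ∑ i ∈ Sᶜ, |f x i| :=
      Finset.sum_nonneg fun i _ => abs_nonneg _
    have hsplit : ∑ i, |f x i| = ∑ i ∈ S, |f x i| + ∑ i ∈ Sᶜ, |f x i| :=
      (Finset.sum_add_sum_compl S _).symm
    nlinarith
  -- core estimate for (ii)
  have part2core : ∀ (x : Fin n → ℝ) (T : Finset (Fin m)), T.card = L →
      ∑ i, |f x i - f xs i| ≤ (2 * (1 + ψ) / (1 - ψ)) * ∑ i ∈ Tᶜ, |f x i| := by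
    intro x T hT
    set d : Fin m → ℝ := fun i => f x i - f xs i with hd
    set σ : ℝ := ∑ i ∈ Tᶜ, |f x i| with hσ
    set c : ℝ := ∑ i ∈ Sᶜ, |d i| with hc
    have hσnn : 0 ≤ σ := Finset.sum_nonneg fun i _ => abs_nonneg _
    have hcnn : 0 ≤ c := Finset.sum_nonneg fun i _ => abs_nonneg _
    have hAS : ∑ i ∈ S, |d i| ≤ ψ * c := hARP' x xs S hScard
    have hAT : ∑ i ∈ T, |d i| ≤ ψ * ∑ i ∈ Tᶜ, |d i| := hARP' x xs T (le_of_eq hT)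
    -- bound on ∑_{Tᶜ} |d|
    have hTc : ∑ i ∈ Tᶜ, |d i| ≤ ψ * c + σ := by
      rw [← Finset.sum_filter_add_sum_filter_not Tᶜ (fun i => i ∈ S) (fun i => |d i|)]
      have hb1 : ∑ i ∈ Tᶜ.filter (fun i => i ∈ S), |d i| ≤ ∑ i ∈ S, |d i| := by
        apply Finset.sum_le_sum_of_subset_of_nonneg
        · intro i hi; exact (Finset.mem_filter.mp hi).2
        · intro i _ _; exact abs_nonneg _
      have hb2 : ∑ i ∈ Tᶜ.filter (fun i => ¬ i ∈ S), |d i| ≤ σ := by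
        calc ∑ i ∈ Tᶜ.filter (fun i => ¬ i ∈ S), |d i|
            = ∑ i ∈ Tᶜ.filter (fun i => ¬ i ∈ S), |f x i| := by
              apply Finset.sum_congr rfl
              intro i hi
              exact hdu x i (Finset.mem_filter.mp hi).2
          _ ≤ σ := by
              apply Finset.sum_le_sum_of_subset_of_nonneg (Finset.filter_subset _ _)
              intro i _ _; exact abs_nonneg _
      linarith
    -- bound on c
    have hcb : c ≤ ∑ i ∈ T, |d i| + σ := by
      rw [hc, ← Finset.sum_filter_add_sum_filter_not Sᶜ (fun i => i ∈ T) (fun i => |d i|)]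
      have hb1 : ∑ i ∈ Sᶜ.filter (fun i => i ∈ T), |d i| ≤ ∑ i ∈ T, |d i| := by
        apply Finset.sum_le_sum_of_subset_of_nonneg
        · intro i hi; exact (Finset.mem_filter.mp hi).2
        · intro i _ _; exact abs_nonneg _
      have hb2 : ∑ i ∈ Sᶜ.filter (fun i => ¬ i ∈ T), |d i| ≤ σ := by
        calc ∑ i ∈ Sᶜ.filter (fun i => ¬ i ∈ T), |d i|
            = ∑ i ∈ Sᶜ.filter (fun i => ¬ i ∈ T), |f x i| := by
              apply Finset.sum_congr rfl
              intro i hi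
              exact hdu x i (Finset.mem_compl.mp (Finset.mem_filter.mp hi).1)
          _ ≤ σ := by
              apply Finset.sum_le_sum_of_subset_of_nonneg
              · intro i hi
                exact Finset.mem_compl.mpr (Finset.mem_filter.mp hi).2
              · intro i _ _; exact abs_nonneg _
      linarith
    have hSd : (0:ℝ) ≤ ∑ i ∈ S, |d i| := Finset.sum_nonneg fun i _ => abs_nonneg _
    -- c ≤ ψ*(ψ*c + σ) + σ
    have hcfinal : (1 - ψ) * c ≤ σ := by nlinarith
    have hD : ∑ i, |d i| = ∑ i ∈ S, |d i| + c := (Finset.sum_add_sum_compl S _).symm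
    have h1ψ : 0 < 1 - ψ := by linarith
    rw [hD, div_mul_eq_mul_div, le_div_iff₀ h1ψ]
    nlinarith
  obtain ⟨T₀, hT₀sub, hT₀⟩ :=
    Finset.exists_subset_card_eq (s := (univ : Finset (Fin m))) (n := L) (by simpa using hLm.le)
  haveI : Nonempty {T : Finset (Fin m) // T.card = L} := ⟨⟨T₀, hT₀⟩⟩
  have h1ψ : (0:ℝ) < 1 - ψ := by linarith
  have hC : (0:ℝ) < 2 * (1 + ψ) / (1 - ψ) := by positivity
  refine ⟨part1, ?_, ?_⟩
  · intro x
    have hgoal : ∑ i, |f x i - f xs i| ≤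
        (2 * (1 + ψ) / (1 - ψ)) * sigmaL L (f x) := by
      have hinf : (∑ i, |f x i - f xs i|) / (2 * (1 + ψ) / (1 - ψ)) ≤ sigmaL L (f x) := by
        apply le_ciInf
        intro T
        rw [div_le_iff₀ hC]
        calc (∑ i, |f x i - f xs i|) ≤ (2 * (1 + ψ) / (1 - ψ)) * ∑ i ∈ (T:Finset (Fin m))ᶜ, |f x i| :=
              part2core x T T.2
          _ = (∑ i ∈ (T:Finset (Fin m))ᶜ, |f x i|) * (2 * (1 + ψ) / (1 - ψ)) := mul_comm _ _
      have := (div_le_iff₀ hC).mp hinf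
      linarith [this, mul_comm (sigmaL L (f x)) (2 * (1 + ψ) / (1 - ψ))]
    have e : ∀ i : Fin m,
        (∑ j, A i j * x j) ^ 2 - (∑ j, A i j * xs j) ^ 2 = f x i - f xs i := by
      intro i; simp only [hf]; ring
    simp_rw [e]
    exact hgoal
  · intro xt hmin
    have heq : ∑ i, |f xt i| = ∑ i, |f xs i| :=
      le_antisymm (hmin xs) (part1 xt)
    have hk := key xt
    have hsplit : ∑ i, |f xt i| = ∑ i ∈ S, |f xt i| + ∑ i ∈ Sᶜ, |f xt i| :=
      (Finset.sum_add_sum_compl S _).symm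
    have hcnn : (0:ℝ) ≤ ∑ i ∈ Sᶜ, |f xt i| :=
      Finset.sum_nonneg fun i _ => abs_nonneg _
    have hczero : ∑ i ∈ Sᶜ, |f xt i| = 0 := by nlinarith
    have hSczero : ∀ i : Fin m, i ∉ S → f xt i = 0 := by
      intro i hi
      have := (Finset.sum_eq_zero_iff_of_nonneg
        (fun i _ => abs_nonneg (f xt i))).mp hczero i (Finset.mem_compl.mpr hi)
      exact abs_eq_zero.mp this
    have hScd : ∑ i ∈ Sᶜ, |f xt i - f xs i| = 0 := by
      apply Finset.sum_eq_zero
      intro i hi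
      rw [hS0 i (Finset.mem_compl.mp hi), hSczero i (Finset.mem_compl.mp hi)]
      simp
    have hSd : ∑ i ∈ S, |f xt i - f xs i| ≤ 0 := by
      have := hARP' xt xs S hScard
      rw [hScd] at this
      linarith
    have hall : ∀ i : Fin m, f xt i = f xs i := by
      intro i
      by_cases hi : i ∈ S
      · have hnn : (0:ℝ) ≤ ∑ i ∈ S, |f xt i - f xs i| :=
          Finset.sum_nonneg fun i _ => abs_nonneg _
        have hz : ∑ i ∈ S, |f xt i - f xs i| = 0 := le_antisymm hSd hnn
        have := (Finset.sum_eq_zero_iff_of_nonneg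
          (fun i _ => abs_nonneg (f xt i - f xs i))).mp hz i hi
        have := abs_eq_zero.mp this
        linarith
      · rw [hS0 i hi, hSczero i hi]
    intro i
    have hsq : (∑ j, A i j * xt j) ^ 2 = (∑ j, A i j * xs j) ^ 2 := by
      have := hall i
      simp only [hf] at this
      linarith
    rw [← Real.sqrt_sq_eq_abs, ← Real.sqrt_sq_eq_abs, hsq]
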